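/- arXiv:2004.07184 — 4 statements merged into one kernel-verified Lean document; each statement's English description precedes it below -/
import Mathlib

section
/- The strong basin of an attractor is forward-invariant under the asynchronous transition relation: if A is an attractor, s ∈ strongBasin(A), and step s s', then s' ∈ strongBasin(A). -/
def step {n : ℕ} (f : Fin n → (Fin n → Bool) → Bool) (s s' : Fin n → Bool) : Prop :=
  ∃ i : Fin n, s' = Function.update s i (f i s)

def reach {n : ℕ} (f : Fin n → (Fin n → Bool) → Bool) (s : Fin n → Bool) :
    Set (Fin n → Bool) :=
  {s' | Relation.ReflTransGen (step f) s s'}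

def IsAttractor {n : ℕ} (f : Fin n → (Fin n → Bool) → Bool)
    (A : Set (Fin n → Bool)) : Prop :=
  A.Nonempty ∧ ∀ s ∈ A, reach f s = A

def weakBasin {n : ℕ} (f : Fin n → (Fin n → Bool) → Bool)
    (A : Set (Fin n → Bool)) : Set (Fin n → Bool) :=
  {s | (reach f s ∩ A).Nonempty}

def strongBasin {n : ℕ} (f : Fin n → (Fin n → Bool) → Bool)
    (A : Set (Fin n → Bool)) : Set (Fin n → Bool) :=
  {s | (reach f s ∩ A).Nonempty ∧
    ∀ A', IsAttractor f A' → A' ≠ A → reach f s ∩ A' = ∅}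

lemma reach_self {n : ℕ} (f : Fin n → (Fin n → Bool) → Bool) (s : Fin n → Bool) :
    s ∈ reach f s := Relation.ReflTransGen.refl

lemma reach_trans {n : ℕ} (f : Fin n → (Fin n → Bool) → Bool) {s t : Fin n → Bool}
    (h : t ∈ reach f s) : reach f t ⊆ reach f s :=
  fun _ hu => Relation.ReflTransGen.trans h hu

lemma exists_attractor_reachable {n : ℕ} (f : Fin n → (Fin n → Bool) → Bool)
    (s : Fin n → Bool) : ∃ A, IsAttractor f A ∧ (reach f s ∩ A).Nonempty := by
  classical
  -- pick t ∈ reach f s minimizing the cardinality of reach f t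
  have hfin : (reach f s).Finite := Set.toFinite _
  obtain ⟨t, ht, hmin⟩ := Set.exists_min_image (reach f s)
    (fun t => (reach f t).ncard) hfin ⟨s, reach_self f s⟩
  refine ⟨reach f t, ⟨⟨t, reach_self f t⟩, ?_⟩, ⟨t, reach_trans f ht (reach_self f t), reach_self f t⟩⟩
  intro u hu
  have hsub : reach f u ⊆ reach f t := reach_trans f hu
  have hus : u ∈ reach f s := reach_trans f ht hu
  have hle : (reach f t).ncard ≤ (reach f u).ncard := hmin u hus
  exact Set.eq_of_subset_of_ncard_le hsub hle (Set.toFinite _)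

theorem strongBasin_forward_invariant {n : ℕ} (f : Fin n → (Fin n → Bool) → Bool)
    (A : Set (Fin n → Bool)) (hA : IsAttractor f A)
    (s s' : Fin n → Bool) (hs : s ∈ strongBasin f A) (hstep : step f s s') :
    s' ∈ strongBasin f A := by
  have hs' : s' ∈ reach f s := Relation.ReflTransGen.single hstep
  have hsub : reach f s' ⊆ reach f s := reach_trans f hs'
  obtain ⟨A', hA', hne⟩ := exists_attractor_reachable f s'
  have hAA : A' = A := by
    by_contra hne'
    have := hs.2 A' hA' hne'
    obtain ⟨x, hx1, hx2⟩ := hne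
    exact absurd (Set.mem_inter (hsub hx1) hx2) (by simp [this])
  refine ⟨hAA ▸ hne, fun A'' h1 h2 => ?_⟩
  have := hs.2 A'' h1 h2
  exact Set.eq_empty_of_subset_empty (this ▸ Set.inter_subset_inter_left A'' hsub)
end

section
/- Characterization of the strong basin via the weak basin: in a Boolean network with at least one node, for every attractor A, a state s belongs to strongBasin(A) if and only if reach(s) ∩ A ≠ ∅ and reach(s) ⊆ weakBasin(A). -/
lemma exists_attr {n : ℕ} (f : Fin n → (Fin n → Bool) → Bool) (s : Fin n → Bool) :
    ∃ A', IsAttractor f A' ∧ (reach f s ∩ A').Nonempty := by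
  obtain ⟨t, ht, hmin⟩ := Set.exists_min_image (reach f s)
    (fun t => (reach f t).ncard) (Set.toFinite _) ⟨s, Relation.ReflTransGen.refl⟩
  refine ⟨reach f t, ⟨⟨t, Relation.ReflTransGen.refl⟩, ?_⟩,
    ⟨t, ht, Relation.ReflTransGen.refl⟩⟩
  intro u hu
  have hsub : reach f u ⊆ reach f t := fun v hv => Relation.ReflTransGen.trans hu hv
  have hus : u ∈ reach f s := Relation.ReflTransGen.trans ht hu
  exact Set.eq_of_subset_of_ncard_le hsub (hmin u hus) (Set.toFinite _)

theorem strongBasin_iff {n : ℕ} (hn : 1 ≤ n) (f : Fin n → (Fin n → Bool) → Bool)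
    (A : Set (Fin n → Bool)) (hA : IsAttractor f A) (s : Fin n → Bool) :
    s ∈ strongBasin f A ↔
      (reach f s ∩ A).Nonempty ∧ reach f s ⊆ weakBasin f A := by
  constructor
  · rintro ⟨hne, hstr⟩
    refine ⟨hne, fun t ht => ?_⟩
    obtain ⟨A', hA', ⟨u, hu, huA'⟩⟩ := exists_attr f t
    by_cases hEq : A' = A
    · exact ⟨u, hu, hEq ▸ huA'⟩
    · exfalso
      have : u ∈ reach f s ∩ A' := ⟨Relation.ReflTransGen.trans ht hu, huA'⟩
      rw [hstr A' hA' hEq] at this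
      exact this
  · rintro ⟨hne, hsub⟩
    refine ⟨hne, fun A' hA' hEq => ?_⟩
    by_contra h
    obtain ⟨t, hts, htA'⟩ := Set.nonempty_iff_ne_empty.mpr h
    obtain ⟨a, hat, haA⟩ := hsub hts
    have h1 : reach f t = A' := hA'.2 t htA'
    have haA' : a ∈ A' := h1 ▸ hat
    exact hEq ((hA'.2 a haA').symm.trans (hA.2 a haA))
end

section
/- An attractor of the original network contained in the controlled state space remains an attractor of the controlled network: for a control C = (O, I), if A is an attractor of the asynchronous transition system of G (i.e., A is nonempty and reach(s) = A for every s ∈ A) and A ⊆ S|_C, then A is an attractor of the asynchronous transition system of G|_C (i.e., reachC(s) = A for every s ∈ A). -/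
def controlledF {n : ℕ} (O I : Finset (Fin n)) (f : Fin n → (Fin n → Bool) → Bool)
    (i : Fin n) (s : Fin n → Bool) : Bool :=
  if i ∈ O then false else if i ∈ I then true else f i s

def applyControl {n : ℕ} (O I : Finset (Fin n)) (s : Fin n → Bool) :
    Fin n → Bool :=
  fun i => if i ∈ O then false else if i ∈ I then true else s i

def controlledSpace {n : ℕ} (O I : Finset (Fin n)) : Set (Fin n → Bool) :=
  {s | (∀ i ∈ O, s i = false) ∧ (∀ i ∈ I, s i = true)}

theorem attractor_preserved_under_control {n : ℕ}
    (f : Fin n → (Fin n → Bool) → Bool)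
    (O I : Finset (Fin n)) (hdisj : Disjoint O I)
    (A : Set (Fin n → Bool)) (hA : IsAttractor f A)
    (hsub : A ⊆ controlledSpace O I) :
    ∀ s ∈ A, reach (controlledF O I f) s = A := by
  obtain ⟨-, hAr⟩ := hA
  intro s hs
  apply Set.Subset.antisymm
  · -- reachC s ⊆ A
    intro t ht
    have : ∀ t, Relation.ReflTransGen (step (controlledF O I f)) s t → t ∈ A := by
      intro t ht
      induction ht with
      | refl => exact hs
      | @tail b c hab hbc ih =>
        obtain ⟨i, hc⟩ := hbc
        by_cases hiO : i ∈ O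
        · have hb := (hsub ih).1 i hiO
          have : c = b := by
            rw [hc]
            funext j
            by_cases hj : j = i
            · subst hj; simp [Function.update, controlledF, hiO, hb]
            · simp [Function.update, hj]
          rw [this]; exact ih
        · by_cases hiI : i ∈ I
          · have hb := (hsub ih).2 i hiI
            have : c = b := by
              rw [hc]
              funext j
              by_cases hj : j = i
              · subst hj; simp [Function.update, controlledF, hiO, hiI, hb]
              · simp [Function.update, hj]
            rw [this]; exact ih
          · have : step f b c := ⟨i, by rw [hc]; simp [controlledF, hiO, hiI]⟩
            have : c ∈ reach f b := Relation.ReflTransGen.single this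
            rw [hAr b ih] at this
            exact this
    exact this t ht
  · -- A ⊆ reachC s
    intro t ht
    have hts : Relation.ReflTransGen (step f) s t := by
      have := hAr s hs
      rw [← this] at ht; exact ht
    have : ∀ t, Relation.ReflTransGen (step f) s t →
        Relation.ReflTransGen (step (controlledF O I f)) s t := by
      intro t ht
      induction ht with
      | refl => exact Relation.ReflTransGen.refl
      | @tail b c hab hbc ih =>
        have hsb := hab
        have hbA : b ∈ A := by
          have := hAr s hs
          rw [← this]; exact hsb
        have hcA : c ∈ A := by
          have : c ∈ reach f b := Relation.ReflTransGen.single hbc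
          rwa [hAr b hbA] at this
        obtain ⟨i, hc⟩ := hbc
        have hstep : step (controlledF O I f) b c := by
          refine ⟨i, ?_⟩
          by_cases hiO : i ∈ O
          · have : f i b = false := by
              have := (hsub hcA).1 i hiO
              rw [hc] at this
              simpa [Function.update] using this
            rw [hc, this]
            simp [controlledF, hiO]
          · by_cases hiI : i ∈ I
            · have : f i b = true := by
                have := (hsub hcA).2 i hiI
                rw [hc] at this
                simpa [Function.update] using this
              rw [hc, this]
              simp [controlledF, hiO, hiI]
            · rw [hc]; simp [controlledF, hiO, hiI]
        exact ih.tail hstep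
    exact this t hts
end

section
/- Every attractor of the controlled network that meets the controlled part of the strong basin of the target is entirely contained in it: for a control C = (O, I) and an attractor A_t of the original network, let W = strongBasin(A_t) ∩ S|_C; if A' is an attractor of the asynchronous transition system of G|_C (i.e., A' is nonempty and reachC(s) = A' for every s ∈ A') and A' ∩ W ≠ ∅, then A' ⊆ W. -/
lemma cstep_key {n : ℕ} (f : Fin n → (Fin n → Bool) → Bool) (O I : Finset (Fin n))
    {s s' : Fin n → Bool} (hs : s ∈ controlledSpace O I)
    (h : step (controlledF O I f) s s') :
    s' ∈ controlledSpace O I ∧ Relation.ReflTransGen (step f) s s' := by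
  obtain ⟨i, rfl⟩ := h
  by_cases hO : i ∈ O
  · have hv : controlledF O I f i s = s i := by simp [controlledF, hO, hs.1 i hO]
    rw [hv, Function.update_eq_self]
    exact ⟨hs, Relation.ReflTransGen.refl⟩
  · by_cases hI : i ∈ I
    · have hv : controlledF O I f i s = s i := by simp [controlledF, hO, hI, hs.2 i hI]
      rw [hv, Function.update_eq_self]
      exact ⟨hs, Relation.ReflTransGen.refl⟩
    · have hcf : controlledF O I f i s = f i s := by simp [controlledF, hO, hI]
      refine ⟨⟨?_, ?_⟩, Relation.ReflTransGen.single ⟨i, by rw [hcf]⟩⟩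
      · intro j hj
        rw [Function.update_of_ne (by rintro rfl; exact hO hj)]
        exact hs.1 j hj
      · intro j hj
        rw [Function.update_of_ne (by rintro rfl; exact hI hj)]
        exact hs.2 j hj

lemma creach_key {n : ℕ} (f : Fin n → (Fin n → Bool) → Bool) (O I : Finset (Fin n))
    {s s' : Fin n → Bool} (hs : s ∈ controlledSpace O I)
    (h : s' ∈ reach (controlledF O I f) s) :
    s' ∈ controlledSpace O I ∧ s' ∈ reach f s := by
  induction h with
  | refl => exact ⟨hs, Relation.ReflTransGen.refl⟩
  | tail _ hbc ih =>
    obtain ⟨h1, h2⟩ := ih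
    obtain ⟨h3, h4⟩ := cstep_key f O I h1 hbc
    exact ⟨h3, Relation.ReflTransGen.trans h2 h4⟩

theorem controlled_attractor_in_W {n : ℕ} (f : Fin n → (Fin n → Bool) → Bool)
    (O I : Finset (Fin n)) (hdisj : Disjoint O I)
    (At : Set (Fin n → Bool)) (hAt : IsAttractor f At)
    (A' : Set (Fin n → Bool)) (hA' : IsAttractor (controlledF O I f) A')
    (hmeet : (A' ∩ (strongBasin f At ∩ controlledSpace O I)).Nonempty) :
    A' ⊆ strongBasin f At ∩ controlledSpace O I := by
  obtain ⟨s0, hs0A, hs0SB, hs0CS⟩ := hmeet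
  intro s hsA
  have h1 : s ∈ reach (controlledF O I f) s0 := by
    rw [hA'.2 s0 hs0A]; exact hsA
  obtain ⟨hsCS, hs_in⟩ := creach_key f O I hs0CS h1
  have h2 : s0 ∈ reach (controlledF O I f) s := by
    rw [hA'.2 s hsA]; exact hs0A
  obtain ⟨_, hs0_in⟩ := creach_key f O I hsCS h2
  have heq : reach f s = reach f s0 := by
    apply Set.Subset.antisymm
    · intro x hx; exact Relation.ReflTransGen.trans hs_in hx
    · intro x hx; exact Relation.ReflTransGen.trans hs0_in hx
  refine ⟨⟨?_, ?_⟩, hsCS⟩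
  · rw [heq]; exact hs0SB.1
  · intro A'' hA'' hne; rw [heq]; exact hs0SB.2 A'' hA'' hne
end
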